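/- In G_n with σ(a_j)=a_{j+1} and τ(d_j)=d_{j+1}: the edge (a_j,a_1) is an improving move for σ only if σ(a_i)=a_{i+1} for all i < j-1 and σ(a_{j-1})=d_j; and the edge (d_j,d_1) is never an improving move for τ. -/

import Mathlib

structure PGame (V : Type) where
  E : V → V → Prop
  isP0 : V → Bool
  p : V → ℤ

namespace PGame

variable {V : Type}

/-- A valid positional strategy for player 0: at every player-0 node it follows an edge. -/
def Strat0Valid (G : PGame V) (σ : V → V) : Prop := ∀ v, G.isP0 v = true → G.E v (σ v)

/-- A valid positional strategy for player 1. -/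
def Strat1Valid (G : PGame V) (τ : V → V) : Prop := ∀ v, G.isP0 v = false → G.E v (τ v)

/-- Edges of the subgraph where player 0 follows `σ` (player 1 keeps all edges). -/
def E0 (G : PGame V) (σ : V → V) (v w : V) : Prop :=
  if G.isP0 v then w = σ v else G.E v w

/-- Edges of the subgraph where player 1 follows `τ` (player 0 keeps all edges). -/
def E1 (G : PGame V) (τ : V → V) (v w : V) : Prop :=
  if G.isP0 v then G.E v w else w = τ v

/-- A cycle of length `k` (given by a `k`-periodic sequence) in the relation `R`. -/
def IsCycle (R : V → V → Prop) (k : ℕ) (c : ℕ → V) : Prop :=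
  0 < k ∧ (∀ i, R (c i) (c (i + 1))) ∧ ∀ i, c (i + k) = c i

/-- The highest priority occurring on the (periodic) cycle `c` is even. -/
def TopEven (G : PGame V) (c : ℕ → V) : Prop :=
  ∃ i, Even (G.p (c i)) ∧ ∀ j, G.p (c j) ≤ G.p (c i)

/-- The highest priority occurring on the (periodic) cycle `c` is odd. -/
def TopOdd (G : PGame V) (c : ℕ → V) : Prop :=
  ∃ i, Odd (G.p (c i)) ∧ ∀ j, G.p (c j) ≤ G.p (c i)

/-- `σ` is an admissible player 0 strategy: valid, and every cycle avoiding the sink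
in the subgraph where player 0 follows `σ` has even highest priority. -/
def Admissible0 (G : PGame V) (top : V) (σ : V → V) : Prop :=
  G.Strat0Valid σ ∧ ∀ k c, IsCycle (G.E0 σ) k c → (∀ i, c i ≠ top) → G.TopEven c

/-- `τ` is an admissible player 1 strategy. -/
def Admissible1 (G : PGame V) (top : V) (τ : V → V) : Prop :=
  G.Strat1Valid τ ∧ ∀ k c, IsCycle (G.E1 τ) k c → (∀ i, c i ≠ top) → G.TopOdd c

/-- `top` is a sink node: unique smallest priority and only the self-loop as outgoing edge. -/
def IsSink (G : PGame V) (top : V) : Prop :=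
  (∀ v, v ≠ top → G.p top < G.p v) ∧ (∀ w, G.E top w ↔ w = top)

/-- A sink parity game. -/
def IsSinkGame (G : PGame V) (top : V) : Prop :=
  G.IsSink top ∧ (∃ σ, G.Admissible0 top σ) ∧ (∃ τ, G.Admissible1 top τ)

/-- One move when both players play their positional strategies. -/
def step (G : PGame V) (σ τ : V → V) (v : V) : V := if G.isP0 v then σ v else τ v

/-- The play from `v` under the strategies `σ`, `τ`. -/
def play (G : PGame V) (σ τ : V → V) (v : V) (n : ℕ) : V := (G.step σ τ)^[n] v

end PGame
/-- Play values: `-∞`, a nonnegative integer vector indexed by priorities, or `∞`. -/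
inductive EV : Type where
  | neg : EV
  | fin : (ℤ → ℕ) → EV
  | pos : EV

/-- The strict comparison `B ◁ C` on vectors: at the largest priority `q` where they differ,
either `q` is even and `B q < C q`, or `q` is odd and `B q > C q`. -/
def vlt (B C : ℤ → ℕ) : Prop :=
  ∃ q : ℤ, B q ≠ C q ∧ (∀ r : ℤ, q < r → B r = C r) ∧
    ((Even q ∧ B q < C q) ∨ (Odd q ∧ C q < B q))

/-- The strict order `◁` extended with `-∞` as least and `∞` as greatest element. -/
def elt : EV → EV → Prop
  | EV.neg, EV.neg => False
  | EV.neg, _ => True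
  | EV.fin B, EV.fin C => vlt B C
  | EV.fin _, EV.pos => True
  | _, _ => False

/-- The non-strict order `⊴`. -/
def ele (x y : EV) : Prop := elt x y ∨ x = y

/-- Priority `q` is seen infinitely often along the play from `v`. -/
def InfOft {V : Type} (G : PGame V) (σ τ : V → V) (v : V) (q : ℤ) : Prop :=
  ∀ n, ∃ m, n ≤ m ∧ G.p (G.play σ τ v m) = q

open Classical in
/-- The play value `Θ_{σ,τ}(v)`: if the play reaches the sink `top`, the vector counting
for each priority how often it occurs before reaching `top`; otherwise `∞` or `-∞`
according to the parity of the highest priority seen infinitely often. -/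
noncomputable def theta {V : Type} (G : PGame V) (top : V) (σ τ : V → V) (v : V) : EV :=
  if h : ∃ n, G.play σ τ v n = top then
    EV.fin (fun q => ((Finset.range (Nat.find h)).filter
      (fun j => G.p (G.play σ τ v j) = q)).card)
  else if ∃ q, InfOft G σ τ v q ∧ Even q ∧ ∀ q', InfOft G σ τ v q' → q' ≤ q
    then EV.pos else EV.neg

/-- `τbar` is an optimal counterstrategy of player 1 against `σ`: it minimizes `Θ_{σ,·}`
pointwise with respect to `⊴`. The valuation is `Ξ_σ = Θ_{σ,τbar}`. -/
def OptCounter1 {V : Type} (G : PGame V) (top : V) (σ τbar : V → V) : Prop :=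
  G.Strat1Valid τbar ∧
    ∀ τ, G.Strat1Valid τ → ∀ v, ele (theta G top σ τbar v) (theta G top σ τ v)

/-- `σbar` is an optimal counterstrategy of player 0 against `τ`: it maximizes `Θ_{·,τ}`
pointwise with respect to `⊴`. The valuation is `Ξ_τ = Θ_{σbar,τ}`. -/
def OptCounter0 {V : Type} (G : PGame V) (top : V) (τ σbar : V → V) : Prop :=
  G.Strat0Valid σbar ∧
    ∀ σ, G.Strat0Valid σ → ∀ v, ele (theta G top σ τ v) (theta G top σbar τ v)
/-- Nodes of the game `G_n`: `(true, i)` is `a_i`, `(false, i)` is `d_i` (for `1 ≤ i ≤ n+1`);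
other indices are junk nodes that just move to the sink `a_{n+1}`. -/
abbrev VN : Type := Bool × ℕ

/-- Priorities of `G_n`: `p(a_i) = 2i+1` for `i ≤ n`, `p(a_{n+1}) = 1`,
`p(d_i) = 2i+2` (so `p(d_{n+1}) = 2n+4`). -/
def pN (n : ℕ) : VN → ℤ
  | (true, i) => if 1 ≤ i ∧ i ≤ n then 2 * (i : ℤ) + 1 else 1
  | (false, i) => if 1 ≤ i ∧ i ≤ n + 1 then 2 * (i : ℤ) + 2 else 1

/-- Edges of `G_n`: `a_1 → a_2, d_2`; `a_i → a_1, a_{i+1}, d_{i+1}` for `2 ≤ i ≤ n`;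
`a_{n+1} → a_{n+1}` (sink); `d_1 → a_2, d_2`; `d_i → d_1, a_{i+1}, d_{i+1}` for `2 ≤ i ≤ n`;
`d_{n+1} → a_{n+1}`. -/
def EN (n : ℕ) : VN → VN → Prop
  | (true, i), w =>
      if i = n + 1 then w = (true, n + 1)
      else if i = 1 then w = (true, 2) ∨ w = (false, 2)
      else if 2 ≤ i ∧ i ≤ n then w = (true, 1) ∨ w = (true, i + 1) ∨ w = (false, i + 1)
      else w = (true, n + 1)
  | (false, i), w =>
      if i = n + 1 then w = (true, n + 1)
      else if i = 1 then w = (true, 2) ∨ w = (false, 2)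
      else if 2 ≤ i ∧ i ≤ n then w = (false, 1) ∨ w = (true, i + 1) ∨ w = (false, i + 1)
      else w = (true, n + 1)

/-- The game `G_n`: `a`-nodes belong to player 0, `d`-nodes to player 1. -/
def GameN (n : ℕ) : PGame VN := ⟨EN n, Prod.fst, pN n⟩

/-- The initial player 0 strategy: `σ₀(a_i) = a_{i+1}` for `i ≤ n`, `σ₀(a_{n+1}) = a_{n+1}`. -/
def sigma0 (n : ℕ) : VN → VN
  | (true, i) => if 1 ≤ i ∧ i ≤ n then (true, i + 1) else (true, n + 1)
  | (false, _) => (true, n + 1)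

/-- The initial player 1 strategy: `τ₀(d_i) = d_{i+1}` for `i ≤ n`, `τ₀(d_{n+1}) = a_{n+1}`. -/
def tau0 (n : ℕ) : VN → VN
  | (false, i) => if 1 ≤ i ∧ i ≤ n then (false, i + 1) else (true, n + 1)
  | (true, _) => (true, n + 1)

section OrderLemmas

theorem vlt_trans {X Y Z : ℤ → ℕ} (h1 : vlt X Y) (h2 : vlt Y Z) : vlt X Z := by
  obtain ⟨q1, hne1, hup1, hd1⟩ := h1
  obtain ⟨q2, hne2, hup2, hd2⟩ := h2
  rcases lt_trichotomy q1 q2 with h | h | h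
  · refine ⟨q2, ?_, ?_, ?_⟩
    · rw [hup1 q2 h]; exact hne2
    · intro r hr; rw [hup1 r (h.trans hr), hup2 r hr]
    · rw [hup1 q2 h]; exact hd2
  · subst h
    refine ⟨q1, ?_, ?_, ?_⟩
    · rcases hd1 with ⟨he1, hl1⟩ | ⟨ho1, hl1⟩ <;> rcases hd2 with ⟨he2, hl2⟩ | ⟨ho2, hl2⟩
      · omega
      · exact absurd ho2 (Int.not_odd_iff_even.mpr he1)
      · exact absurd ho1 (Int.not_odd_iff_even.mpr he2)
      · omega
    · intro r hr; rw [hup1 r hr, hup2 r hr]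
    · rcases hd1 with ⟨he1, hl1⟩ | ⟨ho1, hl1⟩ <;> rcases hd2 with ⟨he2, hl2⟩ | ⟨ho2, hl2⟩
      · exact Or.inl ⟨he1, hl1.trans hl2⟩
      · exact absurd ho2 (Int.not_odd_iff_even.mpr he1)
      · exact absurd ho1 (Int.not_odd_iff_even.mpr he2)
      · exact Or.inr ⟨ho1, hl2.trans hl1⟩
  · refine ⟨q1, ?_, ?_, ?_⟩
    · rw [← hup2 q1 h]; exact hne1
    · intro r hr; rw [hup1 r hr, hup2 r (h.trans hr)]
    · rw [← hup2 q1 h]; exact hd1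

theorem elt_trans : ∀ {x y z : EV}, elt x y → elt y z → elt x z := by
  intro x y z h1 h2
  cases x <;> cases y <;> cases z <;> simp [elt] at * <;> try exact vlt_trans h1 h2

theorem ele_trans {x y z : EV} (h1 : ele x y) (h2 : ele y z) : ele x z := by
  rcases h1 with h1 | rfl
  · rcases h2 with h2 | rfl
    · exact Or.inl (elt_trans h1 h2)
    · exact Or.inl h1
  · exact h2

theorem vlt_add_right {X Y D : ℤ → ℕ} (h : vlt X Y) :
    vlt (fun q => X q + D q) (fun q => Y q + D q) := by
  obtain ⟨q, hne, hup, hd⟩ := h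
  refine ⟨q, by simpa using hne, fun r hr => by simp [hup r hr], ?_⟩
  rcases hd with ⟨he, hl⟩ | ⟨ho, hl⟩
  · exact Or.inl ⟨he, by simpa using hl⟩
  · exact Or.inr ⟨ho, by simpa using hl⟩

theorem ele_fin_add {X Y D : ℤ → ℕ} (h : ele (EV.fin X) (EV.fin Y)) :
    ele (EV.fin (fun q => X q + D q)) (EV.fin (fun q => Y q + D q)) := by
  rcases h with h | h
  · exact Or.inl (vlt_add_right h)
  · injection h with h
    subst h
    exact Or.inr rfl

theorem not_vlt_add_self_even {C E : ℤ → ℕ} {q' : ℤ} (he : Even q') (hq : E q' ≠ 0)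
    (hb : ∀ r, q' < r → E r = 0) : ¬ vlt (fun q => C q + E q) C := by
  rintro ⟨q, hne, hup, hd⟩
  simp only [] at hne hup hd
  have hEq : E q ≠ 0 := by omega
  have h1 : q ≤ q' := by
    by_contra h
    exact hEq (hb q (by omega))
  have h2 : q' ≤ q := by
    by_contra h
    have := hup q' (by omega)
    omega
  have : q = q' := le_antisymm h1 h2
  subst this
  rcases hd with ⟨_, hl⟩ | ⟨ho, _⟩
  · omega
  · exact (Int.not_odd_iff_even.mpr he) ho

theorem not_vlt_self_add_odd {C E : ℤ → ℕ} {q' : ℤ} (ho : Odd q') (hq : E q' ≠ 0)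
    (hb : ∀ r, q' < r → E r = 0) : ¬ vlt C (fun q => C q + E q) := by
  rintro ⟨q, hne, hup, hd⟩
  simp only [] at hne hup hd
  have hEq : E q ≠ 0 := by omega
  have h1 : q ≤ q' := by
    by_contra h
    exact hEq (hb q (by omega))
  have h2 : q' ≤ q := by
    by_contra h
    have := hup q' (by omega)
    omega
  have : q = q' := le_antisymm h1 h2
  subst this
  rcases hd with ⟨he, _⟩ | ⟨_, hl⟩
  · exact (Int.not_odd_iff_even.mpr he) ho
  · omega

/-- Final contradiction lemma, player-1 direction (part 2). -/
theorem keyEven {B C E : ℤ → ℕ} {q' : ℤ} (he : Even q') (hq : E q' ≠ 0)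
    (hb : ∀ r, q' < r → E r = 0)
    (h1 : ele (EV.fin (fun q => C q + E q)) (EV.fin B)) (h2 : vlt B C) : False := by
  have : vlt (fun q => C q + E q) C := by
    rcases h1 with h1 | h1
    · exact vlt_trans h1 h2
    · injection h1 with h1; rw [h1]; exact h2
  exact not_vlt_add_self_even he hq hb this

/-- Final contradiction lemma, player-0 direction (part 1). -/
theorem keyOdd {B C E : ℤ → ℕ} {q' : ℤ} (ho : Odd q') (hq : E q' ≠ 0)
    (hb : ∀ r, q' < r → E r = 0)
    (h1 : ele (EV.fin B) (EV.fin (fun q => C q + E q))) (h2 : vlt C B) : False := by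
  have : vlt C (fun q => C q + E q) := by
    rcases h1 with h1 | h1
    · exact vlt_trans h2 h1
    · injection h1 with h1; rw [← h1]; exact h2
  exact not_vlt_self_add_odd ho hq hb this

end OrderLemmas

section EVBasic
theorem not_elt_fin_neg {B : ℤ → ℕ} : ¬ elt (EV.fin B) EV.neg := fun h => h
theorem not_elt_pos_fin {B : ℤ → ℕ} : ¬ elt EV.pos (EV.fin B) := fun h => h
theorem elt_fin_fin {B C : ℤ → ℕ} : elt (EV.fin B) (EV.fin C) ↔ vlt B C := Iff.rfl
theorem not_ele_fin_neg {B : ℤ → ℕ} : ¬ ele (EV.fin B) EV.neg := by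
  rintro (h | h)
  · exact not_elt_fin_neg h
  · exact EV.noConfusion h
theorem not_ele_pos_fin {B : ℤ → ℕ} : ¬ ele EV.pos (EV.fin B) := by
  rintro (h | h)
  · exact not_elt_pos_fin h
  · exact EV.noConfusion h
end EVBasic
section Infra

open PGame

/-- The sink node. -/
abbrev TOPN (n : ℕ) : VN := (true, n + 1)

theorem GN_isP0 (n : ℕ) (v : VN) : (GameN n).isP0 v = v.1 := rfl
theorem GN_E (n : ℕ) : (GameN n).E = EN n := rfl
theorem GN_p (n : ℕ) : (GameN n).p = pN n := rfl

theorem play_add (n : ℕ) (σ τ : VN → VN) (v : VN) (a b : ℕ) :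
    (GameN n).play σ τ v (a + b) = (GameN n).play σ τ ((GameN n).play σ τ v a) b := by
  simp only [PGame.play]
  rw [Nat.add_comm, Function.iterate_add_apply]

theorem play_succ (n : ℕ) (σ τ : VN → VN) (v : VN) (a : ℕ) :
    (GameN n).play σ τ v (a + 1) = (GameN n).step σ τ ((GameN n).play σ τ v a) := by
  simp only [PGame.play]
  exact Function.iterate_succ_apply' _ _ _

theorem play_succ' (n : ℕ) (σ τ : VN → VN) (v : VN) (a : ℕ) :
    (GameN n).play σ τ v (a + 1) = (GameN n).play σ τ ((GameN n).step σ τ v) a := by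
  simp only [PGame.play]
  exact Function.iterate_succ_apply _ _ _

theorem step_top (n : ℕ) {σ τ : VN → VN} (hσ : (GameN n).Strat0Valid σ) :
    (GameN n).step σ τ (TOPN n) = TOPN n := by
  have h := hσ (TOPN n) rfl
  simp only [GN_E, EN, if_pos rfl] at h
  simp only [PGame.step, GN_isP0]
  exact h

theorem play_stay (n : ℕ) {σ τ : VN → VN} (hσ : (GameN n).Strat0Valid σ) {v : VN} {m : ℕ}
    (hm : (GameN n).play σ τ v m = TOPN n) :
    ∀ k, (GameN n).play σ τ v (m + k) = TOPN n := by
  intro k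
  induction k with
  | zero => simpa using hm
  | succ k ih =>
    rw [show m + (k+1) = (m+k) + 1 by omega, play_succ, ih, step_top n hσ]

/-- All edges of `G_n` land in the finite region (when `1 ≤ n`). -/
theorem EN_snd_le {n : ℕ} (hn : 1 ≤ n) {v w : VN} (h : EN n v w) : w.2 ≤ n + 1 := by
  obtain ⟨b, i⟩ := v
  cases b <;> simp only [EN] at h <;> split_ifs at h with h1 h2 h3
  all_goals first
    | (rcases h with h | h | h <;> subst h <;> simp <;> omega)
    | (rcases h with h | h <;> subst h <;> simp <;> omega)
    | (subst h; simp)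

theorem step_mem (n : ℕ) {σ τ : VN → VN} (hσ : (GameN n).Strat0Valid σ)
    (hτ : (GameN n).Strat1Valid τ) (v : VN) : EN n v ((GameN n).step σ τ v) := by
  simp only [PGame.step, GN_isP0]
  by_cases h : v.1 = true
  · simp only [h, if_true, if_false]; exact hσ v h
  · simp only [h, Bool.false_eq_true, if_true, if_false]; exact hτ v (by simpa [GN_isP0] using h)

/-- Eventual periodicity of any play of valid strategies. -/
theorem exists_period (n : ℕ) (hn : 1 ≤ n) {σ τ : VN → VN} (hσ : (GameN n).Strat0Valid σ)
    (hτ : (GameN n).Strat1Valid τ) (v : VN) :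
    ∃ s k, 0 < k ∧ ∀ i, (GameN n).play σ τ v ((s + i) + k) = (GameN n).play σ τ v (s + i) := by
  have hfin : (Set.univ ×ˢ Set.Iic (n+1) : Set VN).Finite :=
    Set.finite_univ.prod (Set.finite_Iic _)
  have hmem : ∀ m : ℕ, (GameN n).play σ τ v (m + 1) ∈ (Set.univ ×ˢ Set.Iic (n+1) : Set VN) := by
    intro m
    constructor
    · trivial
    · rw [play_succ]
      exact EN_snd_le hn (step_mem n hσ hτ _)
  haveI := hfin.to_subtype
  obtain ⟨x, y, hxy, he⟩ := Finite.exists_ne_map_eq_of_infinite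
    (fun m : ℕ => (⟨(GameN n).play σ τ v (m + 1), hmem m⟩ : (Set.univ ×ˢ Set.Iic (n+1) : Set VN)))
  have he' : (GameN n).play σ τ v (x + 1) = (GameN n).play σ τ v (y + 1) := by
    exact congrArg Subtype.val he
  rcases (Ne.lt_or_gt hxy) with hlt | hlt
  · refine ⟨x + 1, y - x, by omega, fun i => ?_⟩
    have hbase : (GameN n).play σ τ v ((x+1) + (y-x)) = (GameN n).play σ τ v (x+1) := by
      rw [show (x+1) + (y-x) = y + 1 by omega]; exact he'.symm
    calc (GameN n).play σ τ v (((x+1) + i) + (y - x))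
        = (GameN n).play σ τ v (((x+1) + (y-x)) + i) := by ring_nf
      _ = (GameN n).play σ τ ((GameN n).play σ τ v ((x+1) + (y-x))) i := play_add _ _ _ _ _ _
      _ = (GameN n).play σ τ ((GameN n).play σ τ v (x+1)) i := by rw [hbase]
      _ = (GameN n).play σ τ v ((x+1) + i) := (play_add _ _ _ _ _ _).symm
  · refine ⟨y + 1, x - y, by omega, fun i => ?_⟩
    have hbase : (GameN n).play σ τ v ((y+1) + (x-y)) = (GameN n).play σ τ v (y+1) := by
      rw [show (y+1) + (x-y) = x + 1 by omega]; exact he'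
    calc (GameN n).play σ τ v (((y+1) + i) + (x - y))
        = (GameN n).play σ τ v (((y+1) + (x-y)) + i) := by ring_nf
      _ = (GameN n).play σ τ ((GameN n).play σ τ v ((y+1) + (x-y))) i := play_add _ _ _ _ _ _
      _ = (GameN n).play σ τ ((GameN n).play σ τ v (y+1)) i := by rw [hbase]
      _ = (GameN n).play σ τ v ((y+1) + i) := (play_add _ _ _ _ _ _).symm

theorem periodic_mod {α : Type} {c : ℕ → α} {K : ℕ} (hK : 0 < K)
    (h : ∀ i, c (i + K) = c i) : ∀ i, c i = c (i % K) := by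
  intro i
  induction i using Nat.strong_induction_on with
  | _ i ih =>
    by_cases hi : i < K
    · rw [Nat.mod_eq_of_lt hi]
    · push_neg at hi
      have h1 : i = (i - K) + K := by omega
      rw [h1, h, ih (i - K) (by omega), Nat.add_mod_right]

theorem periodic_mul {α : Type} {c : ℕ → α} {K : ℕ}
    (h : ∀ i, c (i + K) = c i) : ∀ t i, c (i + t * K) = c i := by
  intro t
  induction t with
  | zero => simp
  | succ t ih =>
    intro i
    rw [show i + (t+1) * K = (i + t * K) + K by ring, h, ih]

/-- Cycles from periodic tails of plays, in `E1 τ`. -/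
theorem isCycle_E1 (n : ℕ) {σ τ : VN → VN} (hσ : (GameN n).Strat0Valid σ)
    (hτ : (GameN n).Strat1Valid τ) (v : VN) {s k : ℕ} (hk : 0 < k)
    (hper : ∀ i, (GameN n).play σ τ v ((s + i) + k) = (GameN n).play σ τ v (s + i)) :
    PGame.IsCycle ((GameN n).E1 τ) k (fun i => (GameN n).play σ τ v (s + i)) := by
  refine ⟨hk, fun i => ?_, fun i => ?_⟩
  swap
  · show (GameN n).play σ τ v (s + (i + k)) = (GameN n).play σ τ v (s + i)
    rw [show s + (i + k) = (s + i) + k by omega]; exact hper i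
  show (GameN n).E1 τ ((GameN n).play σ τ v (s + i)) ((GameN n).play σ τ v (s + (i+1)))
  have hs : (GameN n).play σ τ v (s + (i+1)) = (GameN n).step σ τ ((GameN n).play σ τ v (s + i)) := by
    rw [show s + (i+1) = (s+i) + 1 by omega, play_succ]
  rw [PGame.E1, hs]
  set u := (GameN n).play σ τ v (s + i)
  by_cases h : (GameN n).isP0 u = true
  · rw [if_pos h]
    simp only [PGame.step, GN_isP0] at h ⊢
    simp only [h, if_true, if_false]
    exact hσ u h
  · rw [if_neg h]
    simp only [PGame.step, GN_isP0] at h ⊢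
    simp only [h, Bool.false_eq_true, if_true, if_false]

/-- Cycles from periodic tails of plays, in `E0 σ`. -/
theorem isCycle_E0 (n : ℕ) {σ τ : VN → VN} (hσ : (GameN n).Strat0Valid σ)
    (hτ : (GameN n).Strat1Valid τ) (v : VN) {s k : ℕ} (hk : 0 < k)
    (hper : ∀ i, (GameN n).play σ τ v ((s + i) + k) = (GameN n).play σ τ v (s + i)) :
    PGame.IsCycle ((GameN n).E0 σ) k (fun i => (GameN n).play σ τ v (s + i)) := by
  refine ⟨hk, fun i => ?_, fun i => ?_⟩
  swap
  · show (GameN n).play σ τ v (s + (i + k)) = (GameN n).play σ τ v (s + i)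
    rw [show s + (i + k) = (s + i) + k by omega]; exact hper i
  show (GameN n).E0 σ ((GameN n).play σ τ v (s + i)) ((GameN n).play σ τ v (s + (i+1)))
  have hs : (GameN n).play σ τ v (s + (i+1)) = (GameN n).step σ τ ((GameN n).play σ τ v (s + i)) := by
    rw [show s + (i+1) = (s+i) + 1 by omega, play_succ]
  rw [PGame.E0, hs]
  set u := (GameN n).play σ τ v (s + i)
  by_cases h : (GameN n).isP0 u = true
  · rw [if_pos h]
    simp only [PGame.step, GN_isP0] at h ⊢
    simp only [h, if_true, if_false]
  · rw [if_neg h]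
    simp only [PGame.step, GN_isP0] at h ⊢
    simp only [h, Bool.false_eq_true, if_true, if_false]
    exact hτ u (by simpa [GN_isP0] using h)

end Infra

theorem step_a (n : ℕ) (σ τ : VN → VN) (m : ℕ) :
    (GameN n).step σ τ (true, m) = σ (true, m) := by
  simp [PGame.step, GN_isP0]

theorem step_d (n : ℕ) (σ τ : VN → VN) (m : ℕ) :
    (GameN n).step σ τ (false, m) = τ (false, m) := by
  simp [PGame.step, GN_isP0]
section Count

open PGame Finset

/-- The priority-count vector of a sequence up to the first time it hits the sink. -/
noncomputable def cnt (n : ℕ) (P : ℕ → VN) (h : ∃ m, P m = TOPN n) : ℤ → ℕ :=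
  fun q => ((Finset.range (Nat.find h)).filter (fun i => (GameN n).p (P i) = q)).card

theorem cnt_congr (n : ℕ) (P : ℕ → VN) (h h' : ∃ m, P m = TOPN n) : cnt n P h = cnt n P h' := rfl

theorem theta_eq_fin (n : ℕ) (σ τ : VN → VN) (v : VN)
    (h : ∃ m, (GameN n).play σ τ v m = TOPN n) :
    theta (GameN n) (TOPN n) σ τ v = EV.fin (cnt n (fun m => (GameN n).play σ τ v m) h) := by
  rw [theta, dif_pos h]
  congr! 2 with q
  rw [cnt]
  congr!

theorem theta_eq_neg (n : ℕ) (σ τ : VN → VN) (v : VN)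
    (h : ¬ ∃ m, (GameN n).play σ τ v m = TOPN n)
    (h2 : ¬ ∃ q, InfOft (GameN n) σ τ v q ∧ Even q ∧ ∀ q', InfOft (GameN n) σ τ v q' → q' ≤ q) :
    theta (GameN n) (TOPN n) σ τ v = EV.neg := by
  rw [theta, dif_neg h, if_neg h2]

theorem theta_eq_pos (n : ℕ) (σ τ : VN → VN) (v : VN)
    (h : ¬ ∃ m, (GameN n).play σ τ v m = TOPN n)
    (h2 : ∃ q, InfOft (GameN n) σ τ v q ∧ Even q ∧ ∀ q', InfOft (GameN n) σ τ v q' → q' ≤ q) :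
    theta (GameN n) (TOPN n) σ τ v = EV.pos := by
  rw [theta, dif_neg h, if_pos h2]

/-- Master counting lemma: if `P` equals `Q` shifted by `m0` and does not hit the sink
before `m0`, then the count of `P` is the count of the prefix plus the count of `Q`. -/
theorem cnt_shift {n : ℕ} {P Q : ℕ → VN} {m0 : ℕ}
    (hPQ : ∀ k, P (m0 + k) = Q k) (hQ : ∃ m, Q m = TOPN n)
    (hpre : ∀ t, t < m0 → P t ≠ TOPN n) :
    ∃ hP : ∃ m, P m = TOPN n, ∀ q, cnt n P hP q =
      (∑ t ∈ Finset.range m0, if (GameN n).p (P t) = q then 1 else 0) + cnt n Q hQ q := by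
  have hP : ∃ m, P m = TOPN n := ⟨m0 + Nat.find hQ, by rw [hPQ]; exact Nat.find_spec hQ⟩
  refine ⟨hP, fun q => ?_⟩
  have hfind : Nat.find hP = m0 + Nat.find hQ := by
    rw [Nat.find_eq_iff]
    constructor
    · rw [hPQ]; exact Nat.find_spec hQ
    · intro k hk
      by_cases hkm : k < m0
      · exact hpre k hkm
      · push_neg at hkm
        have h1 : P k = Q (k - m0) := by
          rw [← hPQ (k - m0), Nat.add_sub_cancel' hkm]
        rw [h1]
        exact Nat.find_min hQ (by omega)
  rw [cnt, hfind, Finset.card_filter, Finset.range_eq_Ico,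
    ← Finset.sum_Ico_consecutive (fun i => if (GameN n).p (P i) = q then 1 else 0)
      (Nat.zero_le m0) (Nat.le_add_right m0 _), ← Finset.range_eq_Ico]
  congr 1
  rw [Finset.sum_Ico_eq_sum_range]
  simp only [Nat.add_sub_cancel_left]
  rw [cnt, Finset.card_filter]
  exact Finset.sum_congr rfl fun k _ => by rw [hPQ k]

/-- Single-step decomposition of counts. -/
theorem cnt_step {n : ℕ} {P Q : ℕ → VN}
    (hPQ : ∀ k, P (1 + k) = Q k) (hQ : ∃ m, Q m = TOPN n)
    (hv : P 0 ≠ TOPN n) :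
    ∃ hP : ∃ m, P m = TOPN n, ∀ q, cnt n P hP q =
      (if (GameN n).p (P 0) = q then 1 else 0) + cnt n Q hQ q := by
  obtain ⟨hP, hc⟩ := cnt_shift hPQ hQ (fun t ht => by interval_cases t; exact hv)
  refine ⟨hP, fun q => ?_⟩
  rw [hc q, Finset.sum_range_one]

end Count

theorem cnt_shift_play {n : ℕ} {σ1 τ1 σ2 τ2 : VN → VN} {v w : VN} {m0 : ℕ}
    (hPQ : ∀ k, (GameN n).play σ1 τ1 v (m0 + k) = (GameN n).play σ2 τ2 w k)
    (hQ : ∃ m, (GameN n).play σ2 τ2 w m = TOPN n)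
    (hpre : ∀ t, t < m0 → (GameN n).play σ1 τ1 v t ≠ TOPN n) :
    ∃ hP : ∃ m, (GameN n).play σ1 τ1 v m = TOPN n, ∀ q,
      cnt n (fun m => (GameN n).play σ1 τ1 v m) hP q =
      (∑ t ∈ Finset.range m0, if (GameN n).p ((GameN n).play σ1 τ1 v t) = q then 1 else 0) +
        cnt n (fun m => (GameN n).play σ2 τ2 w m) hQ q :=
  cnt_shift (P := fun m => (GameN n).play σ1 τ1 v m)
    (Q := fun m => (GameN n).play σ2 τ2 w m) hPQ hQ hpre
section GameFacts

open PGame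

theorem pN_a {n i : ℕ} (h1 : 1 ≤ i) (h2 : i ≤ n) : pN n (true, i) = 2 * (i : ℤ) + 1 := by
  simp only [pN, if_pos (And.intro h1 h2)]

theorem pN_d {n i : ℕ} (h1 : 1 ≤ i) (h2 : i ≤ n + 1) : pN n (false, i) = 2 * (i : ℤ) + 2 := by
  simp only [pN, if_pos (And.intro h1 h2)]

theorem sigma0_valid (n : ℕ) : (GameN n).Strat0Valid (sigma0 n) := by
  rintro ⟨b, i⟩ hb
  simp only [GN_isP0] at hb
  subst hb
  simp only [GN_E, EN, sigma0]
  split_ifs <;> simp [Prod.mk.injEq] <;> omega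

theorem tau0_valid (n : ℕ) : (GameN n).Strat1Valid (tau0 n) := by
  rintro ⟨b, i⟩ hb
  simp only [GN_isP0] at hb
  have : b = false := by simpa using hb
  subst this
  simp only [GN_E, EN, tau0]
  split_ifs <;> simp [Prod.mk.injEq] <;> omega

-- Edge existence lemmas
theorem EN_aa {n i : ℕ} (h1 : 1 ≤ i) (h2 : i ≤ n) : EN n (true, i) (true, i + 1) := by
  simp only [EN]
  split_ifs <;> simp [Prod.mk.injEq] <;> omega

theorem EN_ad {n i : ℕ} (h1 : 1 ≤ i) (h2 : i ≤ n) : EN n (true, i) (false, i + 1) := by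
  simp only [EN]
  split_ifs <;> simp [Prod.mk.injEq] <;> omega

theorem EN_a1 {n i : ℕ} (h1 : 2 ≤ i) (h2 : i ≤ n) : EN n (true, i) (true, 1) := by
  simp only [EN]
  split_ifs <;> simp [Prod.mk.injEq] <;> omega

theorem EN_dd {n i : ℕ} (h1 : 2 ≤ i) (h2 : i ≤ n) : EN n (false, i) (false, i + 1) := by
  simp only [EN]
  split_ifs <;> simp [Prod.mk.injEq] <;> omega

theorem EN_da {n i : ℕ} (h1 : 1 ≤ i) (h2 : i ≤ n) : EN n (false, i) (true, i + 1) := by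
  simp only [EN]
  split_ifs <;> simp [Prod.mk.injEq] <;> omega

-- Edge case analyses
theorem ENa_cases {n i : ℕ} {w : VN} (h1 : 2 ≤ i) (h2 : i ≤ n) (h : EN n (true, i) w) :
    w = (true, 1) ∨ w = (true, i + 1) ∨ w = (false, i + 1) := by
  simp only [EN] at h
  split_ifs at h <;> first | exact h | omega

theorem ENa1_cases {n : ℕ} {w : VN} (hn : 1 ≤ n) (h : EN n (true, 1) w) :
    w = (true, 2) ∨ w = (false, 2) := by
  simp only [EN] at h
  split_ifs at h <;> first | exact h | omega

theorem ENd_cases {n i : ℕ} {w : VN} (h1 : 2 ≤ i) (h2 : i ≤ n) (h : EN n (false, i) w) :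
    w = (false, 1) ∨ w = (true, i + 1) ∨ w = (false, i + 1) := by
  simp only [EN] at h
  split_ifs at h <;> first | exact h | omega

theorem ENd1_cases {n : ℕ} {w : VN} (hn : 1 ≤ n) (h : EN n (false, 1) w) :
    w = (true, 2) ∨ w = (false, 2) := by
  simp only [EN] at h
  split_ifs at h <;> first | exact h | omega

theorem EN_junk_d {n i : ℕ} {w : VN} (hi : ¬ (1 ≤ i ∧ i ≤ n)) (h : EN n (false, i) w) :
    w = TOPN n := by
  simp only [EN] at h
  split_ifs at h <;> first | exact h | omega

theorem EN_junk_a {n i : ℕ} {w : VN} (hi : ¬ (1 ≤ i ∧ i ≤ n)) (h : EN n (true, i) w) :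
    w = TOPN n := by
  simp only [EN] at h
  split_ifs at h <;> first | exact h | omega

end GameFacts
section Reach

open PGame

/-- Under `σ₀` against any admissible `τ`, every play reaches the sink. -/
theorem reach_sigma0 {n : ℕ} (hn : 1 ≤ n) {τ : VN → VN}
    (hτadm : (GameN n).Admissible1 (TOPN n) τ) (v : VN) :
    ∃ m, (GameN n).play (sigma0 n) τ v m = TOPN n := by
  by_contra hnr
  push_neg at hnr
  have hτv := hτadm.1
  have haveA : ∀ k t m', n + 1 - m' ≤ k →
      (GameN n).play (sigma0 n) τ v t = (true, m') → False := by
    intro k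
    induction k with
    | zero =>
      intro t m' hk h
      by_cases hm : m' = n + 1
      · exact hnr t (by rw [h, hm])
      · refine hnr (t+1) ?_
        rw [play_succ, h, step_a]
        simp only [sigma0]
        rw [if_neg (by omega)]
    | succ k ih =>
      intro t m' hk h
      by_cases hm : m' = n + 1
      · exact hnr t (by rw [h, hm])
      · by_cases hm2 : 1 ≤ m' ∧ m' ≤ n
        · refine ih (t+1) (m'+1) (by omega) ?_
          rw [play_succ, h, step_a]
          simp only [sigma0]
          rw [if_pos hm2]
        · refine hnr (t+1) ?_
          rw [play_succ, h, step_a]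
          simp only [sigma0]
          rw [if_neg hm2]
  have hD : ∀ t, ∃ m', (GameN n).play (sigma0 n) τ v t = (false, m') ∧ 1 ≤ m' ∧ m' ≤ n := by
    intro t
    rcases hp : (GameN n).play (sigma0 n) τ v t with ⟨b, m'⟩
    cases b
    · refine ⟨m', rfl, ?_⟩
      by_contra hm2
      have hE : EN n (false, m') (τ (false, m')) := hτv (false, m') rfl
      have hw : τ (false, m') = TOPN n := EN_junk_d hm2 hE
      refine hnr (t+1) ?_
      rw [play_succ, hp, step_d]
      exact hw
    · exact (haveA (n + 1 - m') t m' le_rfl hp).elim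
  obtain ⟨s, k, hk, hper⟩ := exists_period n hn (sigma0_valid n) hτv v
  have hcyc := isCycle_E1 n (sigma0_valid n) hτv v hk hper
  obtain ⟨i0, hodd, -⟩ := hτadm.2 k _ hcyc (fun i => hnr (s+i))
  simp only [] at hodd
  obtain ⟨m', hm', h1, h2⟩ := hD (s + i0)
  rw [hm', GN_p, pN_d h1 (by omega)] at hodd
  have hev : Even (2 * (m' : ℤ) + 2) := ⟨(m' : ℤ) + 1, by ring⟩
  exact (Int.not_odd_iff_even.mpr hev) hodd

/-- Under any admissible `σ` against `τ₀`, every play reaches the sink. -/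
theorem reach_tau0 {n : ℕ} (hn : 1 ≤ n) {σ : VN → VN}
    (hσadm : (GameN n).Admissible0 (TOPN n) σ) (v : VN) :
    ∃ m, (GameN n).play σ (tau0 n) v m = TOPN n := by
  by_contra hnr
  push_neg at hnr
  have hσv := hσadm.1
  have haveD : ∀ k t m', n + 1 - m' ≤ k →
      (GameN n).play σ (tau0 n) v t = (false, m') → False := by
    intro k
    induction k with
    | zero =>
      intro t m' hk h
      refine hnr (t+1) ?_
      rw [play_succ, h, step_d]
      simp only [tau0]
      rw [if_neg (by omega)]
    | succ k ih =>
      intro t m' hk h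
      by_cases hm2 : 1 ≤ m' ∧ m' ≤ n
      · refine ih (t+1) (m'+1) (by omega) ?_
        rw [play_succ, h, step_d]
        simp only [tau0]
        rw [if_pos hm2]
      · refine hnr (t+1) ?_
        rw [play_succ, h, step_d]
        simp only [tau0]
        rw [if_neg hm2]
  have hA : ∀ t, ∃ m', (GameN n).play σ (tau0 n) v t = (true, m') ∧ 1 ≤ m' ∧ m' ≤ n := by
    intro t
    rcases hp : (GameN n).play σ (tau0 n) v t with ⟨b, m'⟩
    cases b
    · exact (haveD (n + 1 - m') t m' le_rfl hp).elim
    · refine ⟨m', rfl, ?_⟩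
      by_cases hm : m' = n + 1
      · exact (hnr t (by rw [hp, hm])).elim
      by_contra hm2
      have hE : EN n (true, m') (σ (true, m')) := hσv (true, m') rfl
      have hw : σ (true, m') = TOPN n := EN_junk_a hm2 hE
      refine hnr (t+1) ?_
      rw [play_succ, hp, step_a]
      exact hw
  obtain ⟨s, k, hk, hper⟩ := exists_period n hn hσv (tau0_valid n) v
  have hcyc := isCycle_E0 n hσv (tau0_valid n) v hk hper
  obtain ⟨i0, hev, -⟩ := hσadm.2 k _ hcyc (fun i => hnr (s+i))
  simp only [] at hev
  obtain ⟨m', hm', h1, h2⟩ := hA (s + i0)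
  rw [hm', GN_p, pN_a h1 h2] at hev
  have hodd : Odd (2 * (m' : ℤ) + 1) := ⟨(m' : ℤ), by ring⟩
  exact (Int.not_odd_iff_even.mpr hev) hodd

/-- F3 for part 2: the optimal play against an admissible `τ` reaches the sink from
every node. -/
theorem reach1 {n : ℕ} (hn : 1 ≤ n) {τ σs : VN → VN}
    (hτadm : (GameN n).Admissible1 (TOPN n) τ)
    (hoptv : (GameN n).Strat0Valid σs)
    (hopt : ∀ σ', (GameN n).Strat0Valid σ' → ∀ u,
      ele (theta (GameN n) (TOPN n) σ' τ u) (theta (GameN n) (TOPN n) σs τ u))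
    (v : VN) : ∃ m, (GameN n).play σs τ v m = TOPN n := by
  by_contra hnr
  push_neg at hnr
  obtain ⟨s, k, hk, hper⟩ := exists_period n hn hoptv hτadm.1 v
  have hper' : ∀ i, (GameN n).play σs τ v (s + (i + k)) = (GameN n).play σs τ v (s + i) :=
    fun i => by rw [show s + (i+k) = s+i+k by omega]; exact hper i
  have hcyc := isCycle_E1 n hoptv hτadm.1 v hk hper
  obtain ⟨i0, hodd, hmax⟩ := hτadm.2 k _ hcyc (fun i => hnr (s+i))
  simp only [] at hodd hmax
  have hposf : ¬ ∃ q, InfOft (GameN n) σs τ v q ∧ Even q ∧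
      ∀ q', InfOft (GameN n) σs τ v q' → q' ≤ q := by
    rintro ⟨q, hio, hev, hdom⟩
    have hio0 : InfOft (GameN n) σs τ v ((GameN n).p ((GameN n).play σs τ v (s + i0))) := by
      intro N
      have hNk : N ≤ N * k := Nat.le_mul_of_pos_right N hk
      refine ⟨s + (i0 + N * k), by omega, ?_⟩
      have := periodic_mul (c := fun i => (GameN n).play σs τ v (s + i)) hper' N i0
      simpa using congrArg (GameN n).p this
    have hle1 := hdom _ hio0
    obtain ⟨m, hm, hpm⟩ := hio s
    have hms : (GameN n).play σs τ v m = (GameN n).play σs τ v (s + (m - s)) := by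
      rw [Nat.add_sub_cancel' hm]
    rw [hms] at hpm
    have hle2 : q ≤ (GameN n).p ((GameN n).play σs τ v (s + i0)) := hpm ▸ hmax (m - s)
    have hq : q = (GameN n).p ((GameN n).play σs τ v (s + i0)) := le_antisymm hle2 hle1
    rw [hq] at hev
    exact (Int.not_odd_iff_even.mpr hev) hodd
  have hneg := theta_eq_neg n σs τ v (fun h => by obtain ⟨m, hm⟩ := h; exact hnr m hm) hposf
  have hr0 := reach_sigma0 hn hτadm v
  have hle := hopt (sigma0 n) (sigma0_valid n) v
  rw [theta_eq_fin n _ τ v hr0, hneg] at hle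
  exact not_ele_fin_neg hle

/-- F3 for part 1: the play of admissible `σ` against its optimal counterstrategy
reaches the sink from every node. -/
theorem reach0 {n : ℕ} (hn : 1 ≤ n) {σ τs : VN → VN}
    (hσadm : (GameN n).Admissible0 (TOPN n) σ)
    (hoptv : (GameN n).Strat1Valid τs)
    (hopt : ∀ τ', (GameN n).Strat1Valid τ' → ∀ u,
      ele (theta (GameN n) (TOPN n) σ τs u) (theta (GameN n) (TOPN n) σ τ' u))
    (v : VN) : ∃ m, (GameN n).play σ τs v m = TOPN n := by
  by_contra hnr
  push_neg at hnr
  obtain ⟨s, k, hk, hper⟩ := exists_period n hn hσadm.1 hoptv v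
  have hper' : ∀ i, (GameN n).play σ τs v (s + (i + k)) = (GameN n).play σ τs v (s + i) :=
    fun i => by rw [show s + (i+k) = s+i+k by omega]; exact hper i
  have hcyc := isCycle_E0 n hσadm.1 hoptv v hk hper
  obtain ⟨i0, hev, hmax⟩ := hσadm.2 k _ hcyc (fun i => hnr (s+i))
  simp only [] at hev hmax
  have hpost : ∃ q, InfOft (GameN n) σ τs v q ∧ Even q ∧
      ∀ q', InfOft (GameN n) σ τs v q' → q' ≤ q := by
    refine ⟨(GameN n).p ((GameN n).play σ τs v (s + i0)), ?_, hev, ?_⟩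
    · intro N
      have hNk : N ≤ N * k := Nat.le_mul_of_pos_right N hk
      refine ⟨s + (i0 + N * k), by omega, ?_⟩
      have := periodic_mul (c := fun i => (GameN n).play σ τs v (s + i)) hper' N i0
      simpa using congrArg (GameN n).p this
    · intro q' hio
      obtain ⟨m, hm, hpm⟩ := hio s
      have hms : (GameN n).play σ τs v m = (GameN n).play σ τs v (s + (m - s)) := by
        rw [Nat.add_sub_cancel' hm]
      rw [hms] at hpm
      exact hpm ▸ hmax (m - s)
  have hpos := theta_eq_pos n σ τs v (fun h => by obtain ⟨m, hm⟩ := h; exact hnr m hm) hpost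
  have hr0 := reach_tau0 hn hσadm v
  have hle := hopt (tau0 n) (tau0_valid n) v
  rw [theta_eq_fin n σ _ v hr0, hpos] at hle
  exact not_ele_pos_fin hle

end Reach
section BStep

open PGame

/-- F5: one-step decomposition of the count vector. -/
theorem B_step {n : ℕ} {σ τ : VN → VN}
    (hreach : ∀ u, ∃ m, (GameN n).play σ τ u m = TOPN n) {v : VN} (hv : v ≠ TOPN n) (q : ℤ) :
    cnt n (fun m => (GameN n).play σ τ v m) (hreach v) q =
      (if (GameN n).p v = q then 1 else 0) +
        cnt n (fun m => (GameN n).play σ τ ((GameN n).step σ τ v) m) (hreach _) q := by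
  obtain ⟨hP, hc⟩ := cnt_step (n := n)
      (P := fun m => (GameN n).play σ τ v m)
      (Q := fun m => (GameN n).play σ τ ((GameN n).step σ τ v) m)
      (fun k => by rw [show 1 + k = k + 1 by omega]; exact play_succ' n σ τ v k)
      (hreach _) hv
  rw [cnt_congr n _ (hreach v) hP]
  exact hc q

end BStep
section Bellman

open PGame

/-- F4 for part 2 (Bellman inequality at player-0 nodes against the optimal
counterstrategy `σs` of player 0 against admissible `τ`). -/
theorem bellman1 {n : ℕ} {τ σs : VN → VN}
    (hτadm : (GameN n).Admissible1 (TOPN n) τ)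
    (hoptv : (GameN n).Strat0Valid σs)
    (hopt : ∀ σ', (GameN n).Strat0Valid σ' → ∀ u,
      ele (theta (GameN n) (TOPN n) σ' τ u) (theta (GameN n) (TOPN n) σs τ u))
    (hreach : ∀ u, ∃ m, (GameN n).play σs τ u m = TOPN n)
    {v w : VN} (hv0 : (GameN n).isP0 v = true) (hvtop : v ≠ TOPN n) (hE : EN n v w) :
    ele (EV.fin (fun q => (if (GameN n).p v = q then 1 else 0) +
        cnt n (fun m => (GameN n).play σs τ w m) (hreach w) q))
      (EV.fin (cnt n (fun m => (GameN n).play σs τ v m) (hreach v))) := by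
  classical
  set σ' := Function.update σs v w with hσ'def
  have hσ'v : (GameN n).Strat0Valid σ' := by
    intro u hu
    by_cases h : u = v
    · subst h; rw [hσ'def, Function.update_self]; exact hE
    · rw [hσ'def, Function.update_of_ne h]; exact hoptv u hu
  by_cases hc : ∃ m, (GameN n).play σs τ w m = v
  · -- the optimal play from w returns to v: a cycle with odd top
    set m0 := Nat.find hc with hm0def
    have hm0 : (GameN n).play σs τ w m0 = v := Nat.find_spec hc
    have hmin : ∀ t, t < m0 → (GameN n).play σs τ w t ≠ v := fun t ht => Nat.find_min hc ht
    have hshift : ∀ k, (GameN n).play σs τ w (m0 + k) = (GameN n).play σs τ v k := by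
      intro k; rw [play_add n σs τ w m0 k, hm0]
    have hpre : ∀ t, t < m0 → (GameN n).play σs τ w t ≠ TOPN n := by
      intro t ht htop
      have hst := play_stay n hoptv htop (m0 - t)
      rw [show t + (m0 - t) = m0 by omega] at hst
      exact hvtop (by rw [← hm0, hst])
    obtain ⟨hPw, hcntw⟩ := cnt_shift_play (n := n) hshift (hreach v) hpre
    have hmod : ∀ t, t ≤ m0 → (GameN n).play σ' τ v (t + 1) = (GameN n).play σs τ w t := by
      intro t
      induction t with
      | zero =>
        intro _
        show (GameN n).play σ' τ v (0 + 1) = w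
        rw [play_succ]
        show (GameN n).step σ' τ v = w
        simp only [PGame.step, hv0, if_true]
        rw [hσ'def, Function.update_self]
      | succ t ih =>
        intro ht
        rw [play_succ, ih (by omega), play_succ]
        have hu_ne : (GameN n).play σs τ w t ≠ v := hmin t (by omega)
        simp only [PGame.step]
        by_cases hu : (GameN n).isP0 ((GameN n).play σs τ w t) = true
        · rw [if_pos hu, if_pos hu, hσ'def, Function.update_of_ne hu_ne]
        · rw [if_neg hu, if_neg hu]
    have hcyc0 : (GameN n).play σ' τ v (m0 + 1) = v := by rw [hmod m0 le_rfl, hm0]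
    have hper : ∀ i, (GameN n).play σ' τ v (i + (m0 + 1)) = (GameN n).play σ' τ v i := by
      intro i
      calc (GameN n).play σ' τ v (i + (m0+1))
          = (GameN n).play σ' τ v ((m0+1) + i) := by ring_nf
        _ = (GameN n).play σ' τ ((GameN n).play σ' τ v (m0+1)) i := play_add _ _ _ _ _ _
        _ = (GameN n).play σ' τ v i := by rw [hcyc0]
    set c := fun i => (GameN n).play σ' τ v (0 + i) with hcdef
    have hcper : ∀ i, c (i + (m0+1)) = c i := by
      intro i
      show (GameN n).play σ' τ v (0 + (i + (m0+1))) = (GameN n).play σ' τ v (0 + i)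
      rw [show 0 + (i + (m0+1)) = (0 + i) + (m0+1) by omega]
      exact hper (0 + i)
    have hcval : ∀ t, t ≤ m0 → c (t + 1) = (GameN n).play σs τ w t := by
      intro t ht
      show (GameN n).play σ' τ v (0 + (t+1)) = _
      rw [Nat.zero_add]
      exact hmod t ht
    have hc0 : c 0 = v := rfl
    have hcnt_top : ∀ t, t ≤ m0 → c t ≠ TOPN n := by
      intro t ht
      cases t with
      | zero => rw [hc0]; exact hvtop
      | succ t => rw [hcval t (by omega)]; exact hpre t (by omega)
    have hcavoid : ∀ i, c i ≠ TOPN n := by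
      intro i
      rw [periodic_mod (by omega) hcper i]
      exact hcnt_top _ (by have := Nat.mod_lt i (y := m0+1) (by omega); omega)
    have hcycle : PGame.IsCycle ((GameN n).E1 τ) (m0+1) c :=
      isCycle_E1 n hσ'v hτadm.1 v (by omega) (fun i => hper (0+i))
    obtain ⟨i0, hodd, hmax⟩ := hτadm.2 (m0+1) c hcycle hcavoid
    have hEbig : 1 ≤ (if (GameN n).p v = (GameN n).p (c i0) then 1 else 0) +
        ∑ t ∈ Finset.range m0,
          if (GameN n).p ((GameN n).play σs τ w t) = (GameN n).p (c i0) then 1 else 0 := by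
      have hr0 := periodic_mod (c := c) (by omega) hcper i0
      have hr0m : i0 % (m0+1) ≤ m0 := by
        have := Nat.mod_lt i0 (y := m0+1) (by omega); omega
      cases hr : i0 % (m0+1) with
      | zero =>
        have hqv : (GameN n).p v = (GameN n).p (c i0) := by
          rw [hr0, hr, hc0]
        rw [if_pos hqv]
        omega
      | succ t =>
        have hqct : (GameN n).p ((GameN n).play σs τ w t) = (GameN n).p (c i0) := by
          rw [hr0, hr, hcval t (by omega)]
        have h2 : 1 ≤ ∑ t' ∈ Finset.range m0,
            if (GameN n).p ((GameN n).play σs τ w t') = (GameN n).p (c i0) then 1 else 0 := by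
          have hle := Finset.single_le_sum
            (f := fun t' => if (GameN n).p ((GameN n).play σs τ w t') = (GameN n).p (c i0)
              then 1 else 0)
            (fun i _ => Nat.zero_le _) (Finset.mem_range.mpr (show t < m0 by omega))
          rw [if_pos hqct] at hle
          exact hle
        omega
    have hEzero : ∀ r, (GameN n).p (c i0) < r →
        ((if (GameN n).p v = r then 1 else 0) +
          ∑ t ∈ Finset.range m0,
            if (GameN n).p ((GameN n).play σs τ w t) = r then 1 else 0) = 0 := by
      intro r hr
      have hpv : (GameN n).p v ≤ (GameN n).p (c i0) := by rw [← hc0]; exact hmax 0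
      have hD0 : (∑ t ∈ Finset.range m0,
          if (GameN n).p ((GameN n).play σs τ w t) = r then 1 else 0) = 0 := by
        refine Finset.sum_eq_zero fun t ht => ?_
        have ht' : t < m0 := Finset.mem_range.mp ht
        have hle : (GameN n).p ((GameN n).play σs τ w t) ≤ (GameN n).p (c i0) := by
          rw [← hcval t (by omega)]
          exact hmax (t+1)
        exact if_neg (by omega)
      rw [hD0, if_neg (by omega)]
    have hfe : (fun q => (if (GameN n).p v = q then 1 else 0) +
        cnt n (fun m => (GameN n).play σs τ w m) (hreach w) q) =
        (fun q => cnt n (fun m => (GameN n).play σs τ v m) (hreach v) q +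
          ((if (GameN n).p v = q then 1 else 0) +
            ∑ t ∈ Finset.range m0,
              if (GameN n).p ((GameN n).play σs τ w t) = q then 1 else 0)) := by
      funext q
      rw [cnt_congr n _ (hreach w) hPw, hcntw q,
        cnt_congr n (fun m => (GameN n).play σs τ v m) _ (hreach v)]
      omega
    rw [hfe]
    refine Or.inl ⟨(GameN n).p (c i0), ?_, ?_, Or.inr ⟨hodd, ?_⟩⟩
    · show cnt n (fun m => (GameN n).play σs τ v m) (hreach v) ((GameN n).p (c i0)) +
        ((if (GameN n).p v = (GameN n).p (c i0) then 1 else 0) +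
          ∑ t ∈ Finset.range m0,
            if (GameN n).p ((GameN n).play σs τ w t) = (GameN n).p (c i0) then 1 else 0) ≠
        cnt n (fun m => (GameN n).play σs τ v m) (hreach v) ((GameN n).p (c i0))
      omega
    · intro r hr
      show cnt n (fun m => (GameN n).play σs τ v m) (hreach v) r +
        ((if (GameN n).p v = r then 1 else 0) +
          ∑ t ∈ Finset.range m0,
            if (GameN n).p ((GameN n).play σs τ w t) = r then 1 else 0) =
        cnt n (fun m => (GameN n).play σs τ v m) (hreach v) r
      have := hEzero r hr
      omega
    · show cnt n (fun m => (GameN n).play σs τ v m) (hreach v) ((GameN n).p (c i0)) <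
        cnt n (fun m => (GameN n).play σs τ v m) (hreach v) ((GameN n).p (c i0)) +
        ((if (GameN n).p v = (GameN n).p (c i0) then 1 else 0) +
          ∑ t ∈ Finset.range m0,
            if (GameN n).p ((GameN n).play σs τ w t) = (GameN n).p (c i0) then 1 else 0)
      omega
  · -- the optimal play from w avoids v: single-switch comparison
    push_neg at hc
    have hPQ : ∀ k, (GameN n).play σ' τ v (1 + k) = (GameN n).play σs τ w k := by
      intro k
      induction k with
      | zero =>
        show (GameN n).play σ' τ v (0 + 1) = w
        rw [play_succ]
        show (GameN n).step σ' τ v = w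
        simp only [PGame.step, hv0, if_true]
        rw [hσ'def, Function.update_self]
      | succ k ih =>
        rw [show 1 + (k+1) = (1+k) + 1 by omega, play_succ, ih, play_succ]
        simp only [PGame.step]
        by_cases hu : (GameN n).isP0 ((GameN n).play σs τ w k) = true
        · rw [if_pos hu, if_pos hu, hσ'def, Function.update_of_ne (hc k)]
        · rw [if_neg hu, if_neg hu]
    obtain ⟨hP, hcnt⟩ := cnt_shift_play (n := n) hPQ (hreach w)
      (fun t ht => by interval_cases t; exact hvtop)
    have hth := hopt σ' hσ'v v
    rw [theta_eq_fin n σ' τ v hP, theta_eq_fin n σs τ v (hreach v)] at hth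
    have hfe : cnt n (fun m => (GameN n).play σ' τ v m) hP =
        fun q => (if (GameN n).p v = q then 1 else 0) +
          cnt n (fun m => (GameN n).play σs τ w m) (hreach w) q := by
      funext q
      rw [hcnt q, Finset.sum_range_one]
      rfl
    rw [hfe] at hth
    exact hth

end Bellman
section Bellman0

open PGame

/-- F4 for part 1 (Bellman inequality at player-1 nodes against the optimal
counterstrategy `τs` of player 1 against admissible `σ`). -/
theorem bellman0 {n : ℕ} {σ τs : VN → VN}
    (hσadm : (GameN n).Admissible0 (TOPN n) σ)
    (hoptv : (GameN n).Strat1Valid τs)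
    (hopt : ∀ τ', (GameN n).Strat1Valid τ' → ∀ u,
      ele (theta (GameN n) (TOPN n) σ τs u) (theta (GameN n) (TOPN n) σ τ' u))
    (hreach : ∀ u, ∃ m, (GameN n).play σ τs u m = TOPN n)
    {v w : VN} (hv0 : (GameN n).isP0 v = false) (hvtop : v ≠ TOPN n) (hE : EN n v w) :
    ele (EV.fin (cnt n (fun m => (GameN n).play σ τs v m) (hreach v)))
      (EV.fin (fun q => (if (GameN n).p v = q then 1 else 0) +
        cnt n (fun m => (GameN n).play σ τs w m) (hreach w) q)) := by
  classical
  set τ' := Function.update τs v w with hτ'def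
  have hτ'v : (GameN n).Strat1Valid τ' := by
    intro u hu
    by_cases h : u = v
    · subst h; rw [hτ'def, Function.update_self]; exact hE
    · rw [hτ'def, Function.update_of_ne h]; exact hoptv u hu
  by_cases hc : ∃ m, (GameN n).play σ τs w m = v
  · -- the optimal play from w returns to v: a cycle with even top
    set m0 := Nat.find hc with hm0def
    have hm0 : (GameN n).play σ τs w m0 = v := Nat.find_spec hc
    have hmin : ∀ t, t < m0 → (GameN n).play σ τs w t ≠ v := fun t ht => Nat.find_min hc ht
    have hshift : ∀ k, (GameN n).play σ τs w (m0 + k) = (GameN n).play σ τs v k := by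
      intro k; rw [play_add n σ τs w m0 k, hm0]
    have hpre : ∀ t, t < m0 → (GameN n).play σ τs w t ≠ TOPN n := by
      intro t ht htop
      have hst := play_stay n hσadm.1 htop (m0 - t)
      rw [show t + (m0 - t) = m0 by omega] at hst
      exact hvtop (by rw [← hm0, hst])
    obtain ⟨hPw, hcntw⟩ := cnt_shift_play (n := n) hshift (hreach v) hpre
    have hmod : ∀ t, t ≤ m0 → (GameN n).play σ τ' v (t + 1) = (GameN n).play σ τs w t := by
      intro t
      induction t with
      | zero =>
        intro _
        show (GameN n).play σ τ' v (0 + 1) = w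
        rw [play_succ]
        show (GameN n).step σ τ' v = w
        simp only [PGame.step, hv0, Bool.false_eq_true, if_false]
        rw [hτ'def, Function.update_self]
      | succ t ih =>
        intro ht
        rw [play_succ, ih (by omega), play_succ]
        have hu_ne : (GameN n).play σ τs w t ≠ v := hmin t (by omega)
        simp only [PGame.step]
        by_cases hu : (GameN n).isP0 ((GameN n).play σ τs w t) = true
        · rw [if_pos hu, if_pos hu]
        · rw [if_neg hu, if_neg hu, hτ'def, Function.update_of_ne hu_ne]
    have hcyc0 : (GameN n).play σ τ' v (m0 + 1) = v := by rw [hmod m0 le_rfl, hm0]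
    have hper : ∀ i, (GameN n).play σ τ' v (i + (m0 + 1)) = (GameN n).play σ τ' v i := by
      intro i
      calc (GameN n).play σ τ' v (i + (m0+1))
          = (GameN n).play σ τ' v ((m0+1) + i) := by ring_nf
        _ = (GameN n).play σ τ' ((GameN n).play σ τ' v (m0+1)) i := play_add _ _ _ _ _ _
        _ = (GameN n).play σ τ' v i := by rw [hcyc0]
    set c := fun i => (GameN n).play σ τ' v (0 + i) with hcdef
    have hcper : ∀ i, c (i + (m0+1)) = c i := by
      intro i
      show (GameN n).play σ τ' v (0 + (i + (m0+1))) = (GameN n).play σ τ' v (0 + i)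
      rw [show 0 + (i + (m0+1)) = (0 + i) + (m0+1) by omega]
      exact hper (0 + i)
    have hcval : ∀ t, t ≤ m0 → c (t + 1) = (GameN n).play σ τs w t := by
      intro t ht
      show (GameN n).play σ τ' v (0 + (t+1)) = _
      rw [Nat.zero_add]
      exact hmod t ht
    have hc0 : c 0 = v := rfl
    have hcnt_top : ∀ t, t ≤ m0 → c t ≠ TOPN n := by
      intro t ht
      cases t with
      | zero => rw [hc0]; exact hvtop
      | succ t => rw [hcval t (by omega)]; exact hpre t (by omega)
    have hcavoid : ∀ i, c i ≠ TOPN n := by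
      intro i
      rw [periodic_mod (by omega) hcper i]
      exact hcnt_top _ (by have := Nat.mod_lt i (y := m0+1) (by omega); omega)
    have hcycle : PGame.IsCycle ((GameN n).E0 σ) (m0+1) c :=
      isCycle_E0 n hσadm.1 hτ'v v (by omega) (fun i => hper (0+i))
    obtain ⟨i0, hev, hmax⟩ := hσadm.2 (m0+1) c hcycle hcavoid
    have hEbig : 1 ≤ (if (GameN n).p v = (GameN n).p (c i0) then 1 else 0) +
        ∑ t ∈ Finset.range m0,
          if (GameN n).p ((GameN n).play σ τs w t) = (GameN n).p (c i0) then 1 else 0 := by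
      have hr0 := periodic_mod (c := c) (by omega) hcper i0
      have hr0m : i0 % (m0+1) ≤ m0 := by
        have := Nat.mod_lt i0 (y := m0+1) (by omega); omega
      cases hr : i0 % (m0+1) with
      | zero =>
        have hqv : (GameN n).p v = (GameN n).p (c i0) := by
          rw [hr0, hr, hc0]
        rw [if_pos hqv]
        omega
      | succ t =>
        have hqct : (GameN n).p ((GameN n).play σ τs w t) = (GameN n).p (c i0) := by
          rw [hr0, hr, hcval t (by omega)]
        have h2 : 1 ≤ ∑ t' ∈ Finset.range m0,
            if (GameN n).p ((GameN n).play σ τs w t') = (GameN n).p (c i0) then 1 else 0 := by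
          have hle := Finset.single_le_sum
            (f := fun t' => if (GameN n).p ((GameN n).play σ τs w t') = (GameN n).p (c i0)
              then 1 else 0)
            (fun i _ => Nat.zero_le _) (Finset.mem_range.mpr (show t < m0 by omega))
          rw [if_pos hqct] at hle
          exact hle
        omega
    have hEzero : ∀ r, (GameN n).p (c i0) < r →
        ((if (GameN n).p v = r then 1 else 0) +
          ∑ t ∈ Finset.range m0,
            if (GameN n).p ((GameN n).play σ τs w t) = r then 1 else 0) = 0 := by
      intro r hr
      have hpv : (GameN n).p v ≤ (GameN n).p (c i0) := by rw [← hc0]; exact hmax 0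
      have hD0 : (∑ t ∈ Finset.range m0,
          if (GameN n).p ((GameN n).play σ τs w t) = r then 1 else 0) = 0 := by
        refine Finset.sum_eq_zero fun t ht => ?_
        have ht' : t < m0 := Finset.mem_range.mp ht
        have hle : (GameN n).p ((GameN n).play σ τs w t) ≤ (GameN n).p (c i0) := by
          rw [← hcval t (by omega)]
          exact hmax (t+1)
        exact if_neg (by omega)
      rw [hD0, if_neg (by omega)]
    have hfe : (fun q => (if (GameN n).p v = q then 1 else 0) +
        cnt n (fun m => (GameN n).play σ τs w m) (hreach w) q) =
        (fun q => cnt n (fun m => (GameN n).play σ τs v m) (hreach v) q +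
          ((if (GameN n).p v = q then 1 else 0) +
            ∑ t ∈ Finset.range m0,
              if (GameN n).p ((GameN n).play σ τs w t) = q then 1 else 0)) := by
      funext q
      rw [cnt_congr n _ (hreach w) hPw, hcntw q,
        cnt_congr n (fun m => (GameN n).play σ τs v m) _ (hreach v)]
      omega
    rw [hfe]
    refine Or.inl ⟨(GameN n).p (c i0), ?_, ?_, Or.inl ⟨hev, ?_⟩⟩
    · show cnt n (fun m => (GameN n).play σ τs v m) (hreach v) ((GameN n).p (c i0)) ≠
        cnt n (fun m => (GameN n).play σ τs v m) (hreach v) ((GameN n).p (c i0)) +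
        ((if (GameN n).p v = (GameN n).p (c i0) then 1 else 0) +
          ∑ t ∈ Finset.range m0,
            if (GameN n).p ((GameN n).play σ τs w t) = (GameN n).p (c i0) then 1 else 0)
      omega
    · intro r hr
      show cnt n (fun m => (GameN n).play σ τs v m) (hreach v) r =
        cnt n (fun m => (GameN n).play σ τs v m) (hreach v) r +
        ((if (GameN n).p v = r then 1 else 0) +
          ∑ t ∈ Finset.range m0,
            if (GameN n).p ((GameN n).play σ τs w t) = r then 1 else 0)
      have := hEzero r hr
      omega
    · show cnt n (fun m => (GameN n).play σ τs v m) (hreach v) ((GameN n).p (c i0)) <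
        cnt n (fun m => (GameN n).play σ τs v m) (hreach v) ((GameN n).p (c i0)) +
        ((if (GameN n).p v = (GameN n).p (c i0) then 1 else 0) +
          ∑ t ∈ Finset.range m0,
            if (GameN n).p ((GameN n).play σ τs w t) = (GameN n).p (c i0) then 1 else 0)
      omega
  · -- the optimal play from w avoids v: single-switch comparison
    push_neg at hc
    have hPQ : ∀ k, (GameN n).play σ τ' v (1 + k) = (GameN n).play σ τs w k := by
      intro k
      induction k with
      | zero =>
        show (GameN n).play σ τ' v (0 + 1) = w
        rw [play_succ]
        show (GameN n).step σ τ' v = w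
        simp only [PGame.step, hv0, Bool.false_eq_true, if_false]
        rw [hτ'def, Function.update_self]
      | succ k ih =>
        rw [show 1 + (k+1) = (1+k) + 1 by omega, play_succ, ih, play_succ]
        simp only [PGame.step]
        by_cases hu : (GameN n).isP0 ((GameN n).play σ τs w k) = true
        · rw [if_pos hu, if_pos hu]
        · rw [if_neg hu, if_neg hu, hτ'def, Function.update_of_ne (hc k)]
    obtain ⟨hP, hcnt⟩ := cnt_shift_play (n := n) hPQ (hreach w)
      (fun t ht => by interval_cases t; exact hvtop)
    have hth := hopt τ' hτ'v v
    rw [theta_eq_fin n σ τ' v hP, theta_eq_fin n σ τs v (hreach v)] at hth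
    have hfe : cnt n (fun m => (GameN n).play σ τ' v m) hP =
        fun q => (if (GameN n).p v = q then 1 else 0) +
          cnt n (fun m => (GameN n).play σ τs w m) (hreach w) q := by
      funext q
      rw [hcnt q, Finset.sum_range_one]
      rfl
    rw [hfe] at hth
    exact hth

end Bellman0
section Steps

open PGame

theorem succ_mod (i l : ℕ) : (l + 1) % i = (l % i + 1) % i := by
  conv_lhs => rw [Nat.add_mod]
  conv_rhs => rw [Nat.add_mod, Nat.mod_mod_of_dvd _ dvd_rfl]

/-- A `d`-cycle `d_1 → ⋯ → d_i → d_1` contradicts admissibility of `τ`. -/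
theorem dcycle {n i : ℕ} {τ : VN → VN} (hτadm : (GameN n).Admissible1 (TOPN n) τ)
    (h1 : 1 ≤ i) (hin : i ≤ n)
    (htr : ∀ l, 1 ≤ l → l < i → τ (false, l) = (false, l + 1))
    (hd : τ (false, i) = (false, 1)) : False := by
  have hcyc : PGame.IsCycle ((GameN n).E1 τ) i (fun l => ((false : Bool), l % i + 1)) := by
    refine ⟨h1, fun l => ?_, fun l => by simp [Nat.add_mod_right]⟩
    show (GameN n).E1 τ (false, l % i + 1) (false, (l+1) % i + 1)
    rw [PGame.E1, if_neg (by simp [GN_isP0])]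
    have hl : l % i < i := Nat.mod_lt l (by omega)
    rcases Nat.lt_or_ge (l % i + 1) i with hlt | hge
    · rw [succ_mod, Nat.mod_eq_of_lt hlt]
      exact (htr (l % i + 1) (by omega) hlt).symm
    · have heq : l % i + 1 = i := by omega
      rw [succ_mod, heq, Nat.mod_self]
      rw [hd]
  obtain ⟨i0, hodd, -⟩ := hτadm.2 i _ hcyc (fun l => by simp [TOPN])
  simp only [] at hodd
  rw [GN_p, pN_d (by omega) (by have := Nat.mod_lt i0 (y := i) (by omega); omega)] at hodd
  have hev : Even (2 * ((i0 % i + 1 : ℕ) : ℤ) + 2) := ⟨((i0 % i + 1 : ℕ) : ℤ) + 1, by ring⟩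
  exact (Int.not_odd_iff_even.mpr hev) hodd

/-- An `a`-cycle `a_1 → ⋯ → a_i → a_1` contradicts admissibility of `σ`. -/
theorem acycle {n i : ℕ} {σ : VN → VN} (hσadm : (GameN n).Admissible0 (TOPN n) σ)
    (h1 : 1 ≤ i) (hin : i ≤ n)
    (htr : ∀ l, 1 ≤ l → l < i → σ (true, l) = (true, l + 1))
    (hd : σ (true, i) = (true, 1)) : False := by
  have hcyc : PGame.IsCycle ((GameN n).E0 σ) i (fun l => ((true : Bool), l % i + 1)) := by
    refine ⟨h1, fun l => ?_, fun l => by simp [Nat.add_mod_right]⟩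
    show (GameN n).E0 σ (true, l % i + 1) (true, (l+1) % i + 1)
    rw [PGame.E0, if_pos (by simp [GN_isP0])]
    have hl : l % i < i := Nat.mod_lt l (by omega)
    rcases Nat.lt_or_ge (l % i + 1) i with hlt | hge
    · rw [succ_mod, Nat.mod_eq_of_lt hlt]
      exact (htr (l % i + 1) (by omega) hlt).symm
    · have heq : l % i + 1 = i := by omega
      rw [succ_mod, heq, Nat.mod_self]
      rw [hd]
  obtain ⟨i0, hev, -⟩ := hσadm.2 i _ hcyc (fun l => by
    have hl := Nat.mod_lt l (y := i) (show 0 < i by omega)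
    simp [TOPN, Prod.ext_iff]; omega)
  simp only [] at hev
  rw [GN_p, pN_a (by omega) (by have := Nat.mod_lt i0 (y := i) (by omega); omega)] at hev
  have hodd : Odd (2 * ((i0 % i + 1 : ℕ) : ℤ) + 1) := ⟨((i0 % i + 1 : ℕ) : ℤ), by ring⟩
  exact (Int.not_odd_iff_even.mpr hev) hodd

/-- Auxiliary predicate for part 2: node `v` is reachable from `d_1` in `E1 τ`
via low priorities, in terms of valuations. -/
def ReachP (n j : ℕ) (σs τ : VN → VN)
    (hreach : ∀ u, ∃ m, (GameN n).play σs τ u m = TOPN n) (v : VN) : Prop :=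
  ∃ E : ℤ → ℕ,
    ele (EV.fin (fun q => cnt n (fun m => (GameN n).play σs τ v m) (hreach v) q + E q))
        (EV.fin (cnt n (fun m => (GameN n).play σs τ (false, 1) m) (hreach (false, 1)))) ∧
    ∀ r : ℤ, 2 * (j : ℤ) + 2 < r → E r = 0

theorem ReachP_base {n j : ℕ} {σs τ : VN → VN}
    (hreach : ∀ u, ∃ m, (GameN n).play σs τ u m = TOPN n) :
    ReachP n j σs τ hreach (false, 1) := by
  refine ⟨fun _ => 0, Or.inr ?_, fun r _ => rfl⟩
  congr 1

theorem ReachP_step_tau {n j : ℕ} {σs τ : VN → VN}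
    (hreach : ∀ u, ∃ m, (GameN n).play σs τ u m = TOPN n) {i : ℕ} {w : VN}
    (hp : (GameN n).p (false, i) ≤ 2 * (j : ℤ) + 2) (hτi : τ (false, i) = w)
    (hr : ReachP n j σs τ hreach (false, i)) : ReachP n j σs τ hreach w := by
  obtain ⟨E, hele, hbd⟩ := hr
  refine ⟨fun q => E q + (if (GameN n).p ((false : Bool), i) = q then 1 else 0), ?_, ?_⟩
  · have hstep := B_step (n := n) hreach (v := ((false : Bool), i)) (by simp [TOPN])
    rw [step_d, hτi] at hstep
    have hfe : (fun q => cnt n (fun m => (GameN n).play σs τ w m) (hreach w) q +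
        (E q + (if (GameN n).p ((false : Bool), i) = q then 1 else 0))) =
        (fun q => cnt n (fun m => (GameN n).play σs τ (false, i) m) (hreach (false, i)) q + E q) := by
      funext q
      rw [hstep q]
      omega
    rw [hfe]
    exact hele
  · intro r hrr
    show E r + (if (GameN n).p (_, i) = r then 1 else 0) = 0
    rw [hbd r hrr, if_neg (by omega)]

theorem ReachP_step_bell {n j : ℕ} {τ σs : VN → VN}
    (hτadm : (GameN n).Admissible1 (TOPN n) τ)
    (hoptv : (GameN n).Strat0Valid σs)
    (hopt : ∀ σ', (GameN n).Strat0Valid σ' → ∀ u,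
      ele (theta (GameN n) (TOPN n) σ' τ u) (theta (GameN n) (TOPN n) σs τ u))
    (hreach : ∀ u, ∃ m, (GameN n).play σs τ u m = TOPN n) {i : ℕ} {w : VN}
    (hitop : ((true : Bool), i) ≠ TOPN n)
    (hp : (GameN n).p (true, i) ≤ 2 * (j : ℤ) + 2) (hE : EN n (true, i) w)
    (hr : ReachP n j σs τ hreach (true, i)) : ReachP n j σs τ hreach w := by
  obtain ⟨E, hele, hbd⟩ := hr
  refine ⟨fun q => E q + (if (GameN n).p ((true : Bool), i) = q then 1 else 0), ?_, ?_⟩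
  · have hb := bellman1 hτadm hoptv hopt hreach (v := ((true : Bool), i)) (w := w) rfl hitop hE
    have hb2 := ele_fin_add (D := E) hb
    have hfe : (fun q => ((if (GameN n).p ((true : Bool), i) = q then 1 else 0) +
        cnt n (fun m => (GameN n).play σs τ w m) (hreach w) q) + E q) =
        (fun q => cnt n (fun m => (GameN n).play σs τ w m) (hreach w) q +
          (E q + (if (GameN n).p ((true : Bool), i) = q then 1 else 0))) := by
      funext q; omega
    rw [hfe] at hb2
    exact ele_trans hb2 hele
  · intro r hrr
    show E r + (if (GameN n).p (_, i) = r then 1 else 0) = 0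
    rw [hbd r hrr, if_neg (by omega)]

/-- Auxiliary predicate for part 1. -/
def ReachQ (n j : ℕ) (σ τs : VN → VN)
    (hreach : ∀ u, ∃ m, (GameN n).play σ τs u m = TOPN n) (v : VN) : Prop :=
  ∃ E : ℤ → ℕ,
    ele (EV.fin (cnt n (fun m => (GameN n).play σ τs (true, 1) m) (hreach (true, 1))))
        (EV.fin (fun q => cnt n (fun m => (GameN n).play σ τs v m) (hreach v) q + E q)) ∧
    ∀ r : ℤ, 2 * (j : ℤ) + 1 < r → E r = 0

theorem ReachQ_base {n j : ℕ} {σ τs : VN → VN}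
    (hreach : ∀ u, ∃ m, (GameN n).play σ τs u m = TOPN n) :
    ReachQ n j σ τs hreach (true, 1) := by
  refine ⟨fun _ => 0, Or.inr ?_, fun r _ => rfl⟩
  congr 1

theorem ReachQ_step_det {n j : ℕ} {σ τs : VN → VN}
    (hreach : ∀ u, ∃ m, (GameN n).play σ τs u m = TOPN n) {i : ℕ} {w : VN}
    (hp : (GameN n).p (true, i) ≤ 2 * (j : ℤ) + 1) (hitop : ((true : Bool), i) ≠ TOPN n)
    (hσi : σ (true, i) = w)
    (hr : ReachQ n j σ τs hreach (true, i)) : ReachQ n j σ τs hreach w := by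
  obtain ⟨E, hele, hbd⟩ := hr
  refine ⟨fun q => E q + (if (GameN n).p ((true : Bool), i) = q then 1 else 0), ?_, ?_⟩
  · have hstep := B_step (n := n) hreach (v := ((true : Bool), i)) hitop
    rw [step_a, hσi] at hstep
    have hfe : (fun q => cnt n (fun m => (GameN n).play σ τs w m) (hreach w) q +
        (E q + (if (GameN n).p ((true : Bool), i) = q then 1 else 0))) =
        (fun q => cnt n (fun m => (GameN n).play σ τs (true, i) m) (hreach (true, i)) q + E q) := by
      funext q
      rw [hstep q]
      omega
    rw [hfe]
    exact hele
  · intro r hrr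
    show E r + (if (GameN n).p (_, i) = r then 1 else 0) = 0
    rw [hbd r hrr, if_neg (by omega)]

theorem ReachQ_step_bell {n j : ℕ} {σ τs : VN → VN}
    (hσadm : (GameN n).Admissible0 (TOPN n) σ)
    (hoptv : (GameN n).Strat1Valid τs)
    (hopt : ∀ τ', (GameN n).Strat1Valid τ' → ∀ u,
      ele (theta (GameN n) (TOPN n) σ τs u) (theta (GameN n) (TOPN n) σ τ' u))
    (hreach : ∀ u, ∃ m, (GameN n).play σ τs u m = TOPN n) {i : ℕ} {w : VN}
    (hp : (GameN n).p (false, i) ≤ 2 * (j : ℤ) + 1) (hE : EN n (false, i) w)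
    (hr : ReachQ n j σ τs hreach (false, i)) : ReachQ n j σ τs hreach w := by
  obtain ⟨E, hele, hbd⟩ := hr
  refine ⟨fun q => E q + (if (GameN n).p ((false : Bool), i) = q then 1 else 0), ?_, ?_⟩
  · have hb := bellman0 hσadm hoptv hopt hreach (v := ((false : Bool), i)) (w := w) rfl
      (by simp [TOPN]) hE
    have hb2 := ele_fin_add (D := E) hb
    have hfe : (fun q => ((if (GameN n).p ((false : Bool), i) = q then 1 else 0) +
        cnt n (fun m => (GameN n).play σ τs w m) (hreach w) q) + E q) =
        (fun q => cnt n (fun m => (GameN n).play σ τs w m) (hreach w) q +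
          (E q + (if (GameN n).p ((false : Bool), i) = q then 1 else 0))) := by
      funext q; omega
    rw [hfe] at hb2
    exact ele_trans (ele_trans hele hb2) (Or.inr rfl)
  · intro r hrr
    show E r + (if (GameN n).p (_, i) = r then 1 else 0) = 0
    rw [hbd r hrr, if_neg (by omega)]

end Steps
section Final

open PGame

theorem part2 {n j : ℕ} (h2 : 2 ≤ j) (hjn : j ≤ n) {τ τbar : VN → VN}
    (hτ : (GameN n).Admissible1 (TOPN n) τ)
    (hτj : τ (false, j) = (false, j + 1))
    (hτbar : OptCounter0 (GameN n) (TOPN n) τ τbar) :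
    ¬ elt (theta (GameN n) (TOPN n) τbar τ (false, 1))
          (theta (GameN n) (TOPN n) τbar τ (τ (false, j))) := by
  have hn : 1 ≤ n := by omega
  have hreach : ∀ u, ∃ m, (GameN n).play τbar τ u m = TOPN n :=
    reach1 hn hτ hτbar.1 hτbar.2
  intro hcon
  rw [hτj, theta_eq_fin n τbar τ (false, 1) (hreach _),
    theta_eq_fin n τbar τ (false, j + 1) (hreach _)] at hcon
  have hvlt : vlt (cnt n (fun m => (GameN n).play τbar τ (false, 1) m) (hreach _))
      (cnt n (fun m => (GameN n).play τbar τ (false, j + 1) m) (hreach _)) := hcon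
  have hfalse : ReachP n j τbar τ hreach (false, j) → False := by
    rintro ⟨E, hele, hbd⟩
    have hstep := B_step (n := n) hreach (v := ((false : Bool), j)) (by simp [TOPN])
    rw [step_d, hτj] at hstep
    have hfe : (fun q => cnt n (fun m => (GameN n).play τbar τ (false, j) m)
          (hreach (false, j)) q + E q) =
        (fun q => cnt n (fun m => (GameN n).play τbar τ (false, j + 1) m)
          (hreach (false, j + 1)) q +
          (E q + (if (GameN n).p ((false : Bool), j) = q then 1 else 0))) := by
      funext q; rw [hstep q]; omega
    rw [hfe] at hele
    refine keyEven (q' := 2 * (j : ℤ) + 2)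
      (E := fun q => E q + (if (GameN n).p ((false : Bool), j) = q then 1 else 0))
      ⟨(j : ℤ) + 1, by ring⟩ ?_ ?_ hele hvlt
    · show E (2 * (j : ℤ) + 2) +
        (if (GameN n).p ((false : Bool), j) = 2 * (j : ℤ) + 2 then 1 else 0) ≠ 0
      rw [if_pos (show (GameN n).p ((false : Bool), j) = 2 * (j : ℤ) + 2 by
        rw [GN_p, pN_d (by omega) (by omega)])]
      omega
    · intro r hr
      show E r + (if (GameN n).p ((false : Bool), j) = r then 1 else 0) = 0
      rw [hbd r hr, if_neg (show ¬ (GameN n).p ((false : Bool), j) = r by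
        rw [GN_p, pN_d (by omega) (by omega)]; omega)]
  have climb : ∀ m i, 1 ≤ i → i + m + 1 = j → ReachP n j τbar τ hreach (true, i) →
      ReachP n j τbar τ hreach (false, j) := by
    intro m
    induction m with
    | zero =>
      intro i h1 hij hr
      have hw := ReachP_step_bell hτ hτbar.1 hτbar.2 hreach
        (by simp [TOPN, Prod.ext_iff]; omega)
        (by rw [GN_p, pN_a h1 (by omega)]; omega) (EN_ad h1 (by omega)) hr
      rw [show i + 1 = j by omega] at hw
      exact hw
    | succ m ih =>
      intro i h1 hij hr
      exact ih (i+1) (by omega) (by omega)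
        (ReachP_step_bell hτ hτbar.1 hτbar.2 hreach (by simp [TOPN, Prod.ext_iff]; omega)
          (by rw [GN_p, pN_a h1 (by omega)]; omega) (EN_aa h1 (by omega)) hr)
  have fromA : ∀ i, 1 ≤ i → i ≤ j → ReachP n j τbar τ hreach (true, i) →
      ReachP n j τbar τ hreach (false, j) := by
    intro i h1 hij hr
    by_cases hij' : i = j
    · have hr1 : ReachP n j τbar τ hreach (true, 1) :=
        ReachP_step_bell hτ hτbar.1 hτbar.2 hreach (by simp [TOPN, Prod.ext_iff]; omega)
          (by rw [GN_p, pN_a h1 (by omega)]; omega) (EN_a1 (by omega) (by omega)) hr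
      exact climb (j - 2) 1 le_rfl (by omega) hr1
    · exact climb (j - i - 1) i h1 (by omega) hr
  have dtrack : ∀ m i, 1 ≤ i → i + m = j →
      (∀ l, 1 ≤ l → l < i → τ (false, l) = (false, l + 1)) →
      ReachP n j τbar τ hreach (false, i) → ReachP n j τbar τ hreach (false, j) := by
    intro m
    induction m with
    | zero =>
      intro i h1 hij htr hr
      rw [show i = j by omega] at hr
      exact hr
    | succ m ih =>
      intro i h1 hij htr hr
      by_cases ht : τ (false, i) = (false, i + 1)
      · refine ih (i+1) (by omega) (by omega) ?_
          (ReachP_step_tau hreach (by rw [GN_p, pN_d h1 (by omega)]; omega) ht hr)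
        intro l hl1 hl2
        rcases Nat.lt_or_ge l i with h | h
        · exact htr l hl1 h
        · have hli : l = i := by omega
          rw [hli]; exact ht
      · have hEopt : EN n (false, i) (τ (false, i)) := hτ.1 (false, i) rfl
        by_cases hi1 : i = 1
        · subst hi1
          rcases ENd1_cases hn hEopt with h | h
          · exact fromA 2 (by omega) (by omega)
              (ReachP_step_tau hreach (by rw [GN_p, pN_d (by omega) (by omega)]; omega) h hr)
          · exact absurd h ht
        · rcases ENd_cases (show 2 ≤ i by omega) (show i ≤ n by omega) hEopt with h | h | h
          · exact (dcycle hτ (by omega) (by omega) htr h).elim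
          · exact fromA (i+1) (by omega) (by omega)
              (ReachP_step_tau hreach (by rw [GN_p, pN_d h1 (by omega)]; omega) h hr)
          · exact absurd h ht
  exact hfalse (dtrack (j - 1) 1 (by omega) (by omega)
    (fun l hl1 hl2 => absurd hl2 (by omega)) (ReachP_base hreach))

theorem part1 {n j : ℕ} (h2 : 2 ≤ j) (hjn : j ≤ n) {σ σbar : VN → VN}
    (hσ : (GameN n).Admissible0 (TOPN n) σ)
    (hσj : σ (true, j) = (true, j + 1))
    (hσbar : OptCounter1 (GameN n) (TOPN n) σ σbar)
    (hcon : elt (theta (GameN n) (TOPN n) σ σbar (σ (true, j)))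
         (theta (GameN n) (TOPN n) σ σbar (true, 1))) :
    (∀ i : ℕ, 1 ≤ i → i < j - 1 → σ (true, i) = (true, i + 1)) ∧
      σ (true, j - 1) = (false, j) := by
  have hn : 1 ≤ n := by omega
  have hreach : ∀ u, ∃ m, (GameN n).play σ σbar u m = TOPN n :=
    reach0 hn hσ hσbar.1 hσbar.2
  rw [hσj, theta_eq_fin n σ σbar (true, j + 1) (hreach _),
    theta_eq_fin n σ σbar (true, 1) (hreach _)] at hcon
  have hvlt : vlt (cnt n (fun m => (GameN n).play σ σbar (true, j + 1) m) (hreach _))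
      (cnt n (fun m => (GameN n).play σ σbar (true, 1) m) (hreach _)) := hcon
  have hfinal : ReachQ n j σ σbar hreach (true, j) → False := by
    rintro ⟨E, hele, hbd⟩
    have hstep := B_step (n := n) hreach (v := ((true : Bool), j))
      (by simp [TOPN, Prod.ext_iff]; omega)
    rw [step_a, hσj] at hstep
    have hfe : (fun q => cnt n (fun m => (GameN n).play σ σbar (true, j) m)
          (hreach (true, j)) q + E q) =
        (fun q => cnt n (fun m => (GameN n).play σ σbar (true, j + 1) m)
          (hreach (true, j + 1)) q +
          (E q + (if (GameN n).p ((true : Bool), j) = q then 1 else 0))) := by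
      funext q; rw [hstep q]; omega
    rw [hfe] at hele
    refine keyOdd (q' := 2 * (j : ℤ) + 1)
      (E := fun q => E q + (if (GameN n).p ((true : Bool), j) = q then 1 else 0))
      ⟨(j : ℤ), by ring⟩ ?_ ?_ hele hvlt
    · show E (2 * (j : ℤ) + 1) +
        (if (GameN n).p ((true : Bool), j) = 2 * (j : ℤ) + 1 then 1 else 0) ≠ 0
      rw [if_pos (show (GameN n).p ((true : Bool), j) = 2 * (j : ℤ) + 1 by
        rw [GN_p, pN_a (by omega) hjn])]
      omega
    · intro r hr
      show E r + (if (GameN n).p ((true : Bool), j) = r then 1 else 0) = 0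
      rw [hbd r hr, if_neg (show ¬ (GameN n).p ((true : Bool), j) = r by
        rw [GN_p, pN_a (by omega) hjn]; omega)]
  have hA1 : ∀ i, 1 ≤ i → i ≤ j - 1 →
      (∀ l, 1 ≤ l → l < i → σ (true, l) = (true, l + 1)) →
      ReachQ n j σ σbar hreach (true, i) := by
    intro i
    induction i with
    | zero => omega
    | succ i ih =>
      intro h1 hij htr
      by_cases hi0 : i = 0
      · subst hi0
        exact ReachQ_base hreach
      · have hri : ReachQ n j σ σbar hreach (true, i) :=
          ih (by omega) (by omega) (fun l hl1 hl2 => htr l hl1 (by omega))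
        exact ReachQ_step_det hreach (by rw [GN_p, pN_a (by omega) (by omega)]; omega)
          (by simp [TOPN, Prod.ext_iff]; omega) (htr i (by omega) (by omega)) hri
  have dclimb : ∀ m i, 2 ≤ i → i + m + 1 = j → ReachQ n j σ σbar hreach (false, i) →
      ReachQ n j σ σbar hreach (true, j) := by
    intro m
    induction m with
    | zero =>
      intro i h1 hij hr
      have hw := ReachQ_step_bell hσ hσbar.1 hσbar.2 hreach
        (by rw [GN_p, pN_d (by omega) (by omega)]; omega) (EN_da (by omega) (by omega)) hr
      rw [show i + 1 = j by omega] at hw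
      exact hw
    | succ m ih =>
      intro i h1 hij hr
      exact ih (i+1) (by omega) (by omega)
        (ReachQ_step_bell hσ hσbar.1 hσbar.2 hreach
          (by rw [GN_p, pN_d (by omega) (by omega)]; omega) (EN_dd h1 (by omega)) hr)
  have key2 : ∀ i, 1 ≤ i → i ≤ j - 2 →
      (∀ l, 1 ≤ l → l < i → σ (true, l) = (true, l + 1)) →
      σ (true, i) = (true, i + 1) := by
    intro i h1 hij htr
    have hr : ReachQ n j σ σbar hreach (true, i) := hA1 i h1 (by omega) htr
    have hEopt : EN n (true, i) (σ (true, i)) := hσ.1 (true, i) rfl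
    have hdet : ∀ w, σ (true, i) = w → ReachQ n j σ σbar hreach w := fun w hw =>
      ReachQ_step_det hreach (by rw [GN_p, pN_a (by omega) (by omega)]; omega)
        (by simp [TOPN, Prod.ext_iff]; omega) hw hr
    by_cases hi1 : i = 1
    · subst hi1
      rcases ENa1_cases hn hEopt with h | h
      · exact h
      · exact ((hfinal (dclimb (j - 3) 2 le_rfl (by omega) (hdet _ h)))).elim
    · rcases ENa_cases (show 2 ≤ i by omega) (show i ≤ n by omega) hEopt with h | h | h
      · exact (acycle hσ (by omega) (show i ≤ n by omega) htr h).elim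
      · exact h
      · exact ((hfinal (dclimb (j - i - 2) (i+1) (by omega) (by omega) (hdet _ h)))).elim
  have htrack : ∀ i, 1 ≤ i → i ≤ j - 2 → σ (true, i) = (true, i + 1) := by
    intro i
    induction i using Nat.strong_induction_on with
    | _ i ih =>
      intro h1 h2'
      exact key2 i h1 h2' (fun l hl1 hl2 => ih l hl2 hl1 (by omega))
  refine ⟨fun i hi1 hi2 => htrack i hi1 (by omega), ?_⟩
  have hrj1 : ReachQ n j σ σbar hreach (true, j - 1) :=
    hA1 (j-1) (by omega) le_rfl (fun l hl1 hl2 => htrack l hl1 (by omega))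
  have hEopt : EN n (true, j - 1) (σ (true, j - 1)) := hσ.1 (true, j - 1) rfl
  have hdet : ∀ w, σ (true, j - 1) = w → ReachQ n j σ σbar hreach w := fun w hw =>
    ReachQ_step_det hreach (by rw [GN_p, pN_a (by omega) (by omega)]; omega)
      (by simp [TOPN, Prod.ext_iff]; omega) hw hrj1
  by_cases hj2 : j = 2
  · subst hj2
    rcases ENa1_cases hn hEopt with h | h
    · exact ((hfinal (hdet _ h))).elim
    · exact h
  · rcases ENa_cases (show 2 ≤ j - 1 by omega) (show j - 1 ≤ n by omega) hEopt with h | h | h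
    · exact (acycle hσ (by omega) (by omega) (fun l hl1 hl2 => htrack l hl1 (by omega)) h).elim
    · have hq := hdet _ h
      rw [show j - 1 + 1 = j by omega] at hq
      exact ((hfinal hq)).elim
    · rw [show j - 1 + 1 = j by omega] at h
      exact h

end Final

/-- In `G_n` with `σ(a_j) = a_{j+1}` and `τ(d_j) = d_{j+1}`: the edge `(a_j, a_1)` is an
improving move for `σ` only if `σ(a_i) = a_{i+1}` for all `1 ≤ i < j-1` and
`σ(a_{j-1}) = d_j`; and the edge `(d_j, d_1)` is never an improving move for `τ`. -/
theorem stmt14 (n j : ℕ) (h2 : 2 ≤ j) (hjn : j ≤ n)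
    (σ τ : VN → VN)
    (hσ : (GameN n).Admissible0 (true, n + 1) σ)
    (hτ : (GameN n).Admissible1 (true, n + 1) τ)
    (hσj : σ (true, j) = (true, j + 1)) (hτj : τ (false, j) = (false, j + 1))
    (σbar τbar : VN → VN)
    (hσbar : OptCounter1 (GameN n) (true, n + 1) σ σbar)
    (hτbar : OptCounter0 (GameN n) (true, n + 1) τ τbar) :
    (elt (theta (GameN n) (true, n + 1) σ σbar (σ (true, j)))
         (theta (GameN n) (true, n + 1) σ σbar (true, 1)) →
      (∀ i : ℕ, 1 ≤ i → i < j - 1 → σ (true, i) = (true, i + 1)) ∧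
      σ (true, j - 1) = (false, j)) ∧
    ¬ elt (theta (GameN n) (true, n + 1) τbar τ (false, 1))
          (theta (GameN n) (true, n + 1) τbar τ (τ (false, j))) :=
  ⟨fun hcon => part1 h2 hjn hσ hσj hσbar hcon, part2 h2 hjn hτ hτj hτbar⟩
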